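/- Let c < d be real numbers, Λ ⊆ ℝ an interval, and f : [c,d] × Λ → (0,∞) a jointly continuous positive function such that ∂f/∂λ exists and is jointly continuous, and ∂f/∂λ(x,λ) = f(x,λ)·g(x,λ) where for each λ the function x ↦ g(x,λ) is strictly increasing on [c,d]. Then for every x ∈ (c,d), the function λ ↦ h(x,λ) := (∫_x^d f(y,λ) dy)/(∫_c^x f(y,λ) dy) is strictly increasing on Λ. -/

import Mathlib

open Set intervalIntegral

open Metric Filter MeasureTheory in
private lemma aux_compact_nhds {Λ : Set ℝ} (hΛ : Λ.OrdConnected) {l : ℝ} (hl : l ∈ Λ) :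
    ∃ u v : ℝ, Icc u v ⊆ Λ ∧ Icc u v ∈ nhdsWithin l Λ := by
  have hleft : ∃ u ∈ Λ, u ≤ l ∧ ∀ᶠ t in nhdsWithin l Λ, u ≤ t := by
    by_cases h : ∃ p ∈ Λ, p < l
    · obtain ⟨p, hp, hpl⟩ := h
      exact ⟨p, hp, hpl.le,
        ((eventually_gt_nhds hpl).mono fun t ht => ht.le).filter_mono nhdsWithin_le_nhds⟩
    · push_neg at h
      exact ⟨l, hl, le_rfl, eventually_mem_nhdsWithin.mono fun t ht => h t ht⟩
  have hright : ∃ v ∈ Λ, l ≤ v ∧ ∀ᶠ t in nhdsWithin l Λ, t ≤ v := by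
    by_cases h : ∃ q ∈ Λ, l < q
    · obtain ⟨q, hq, hlq⟩ := h
      exact ⟨q, hq, hlq.le,
        ((eventually_lt_nhds hlq).mono fun t ht => ht.le).filter_mono nhdsWithin_le_nhds⟩
    · push_neg at h
      exact ⟨l, hl, le_rfl, eventually_mem_nhdsWithin.mono fun t ht => h t ht⟩
  obtain ⟨u, huΛ, _, hu⟩ := hleft
  obtain ⟨v, hvΛ, _, hv⟩ := hright
  exact ⟨u, v, hΛ.out huΛ hvΛ, Filter.eventually_iff.1 ((hu.and hv).mono fun t ht => ht)⟩

open Metric Filter MeasureTheory in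
private lemma aux_contOn_param {c d : ℝ} {Λ : Set ℝ} (hΛ : Λ.OrdConnected) {F : ℝ → ℝ → ℝ}
    (hF : ContinuousOn (fun p : ℝ × ℝ => F p.1 p.2) (Icc c d ×ˢ Λ))
    {a b : ℝ} (hab : uIcc a b ⊆ Icc c d) :
    ContinuousOn (fun l => ∫ y in a..b, F y l) Λ := by
  have hIcc : uIoc a b ⊆ Icc c d := fun y hy => hab (uIoc_subset_uIcc hy)
  have hFy : ∀ t ∈ Λ, ContinuousOn (fun y => F y t) (Icc c d) := fun t ht =>
    hF.comp ((continuous_id.prodMk continuous_const).continuousOn) (fun y hy => ⟨hy, ht⟩)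
  intro l hl
  obtain ⟨u, v, hKΛ, hKmem⟩ := aux_compact_nhds hΛ hl
  obtain ⟨M, hM⟩ := (isCompact_Icc.prod isCompact_Icc).exists_bound_of_continuousOn
    (hF.mono (prod_mono_right hKΛ))
  apply intervalIntegral.continuousWithinAt_of_dominated_interval (bound := fun _ => M)
  · filter_upwards [eventually_mem_nhdsWithin] with t ht using
      ((hFy t ht).mono hIcc).aestronglyMeasurable measurableSet_uIoc
  · filter_upwards [hKmem] with t htK using
      ae_of_all _ fun y hy => hM (y, t) ⟨hIcc hy, htK⟩
  · exact intervalIntegrable_const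
  · exact ae_of_all _ fun y hy =>
      (hF.comp ((continuous_const.prodMk continuous_id).continuousOn)
        (fun t ht => ⟨hIcc hy, ht⟩)) l hl

open Metric Filter MeasureTheory in
private lemma aux_hasDerivAt_param {c d : ℝ} {Λ : Set ℝ} {f g : ℝ → ℝ → ℝ}
    (hf_cont : ContinuousOn (fun p : ℝ × ℝ => f p.1 p.2) (Icc c d ×ˢ Λ))
    (hf_deriv : ∀ x ∈ Icc c d, ∀ l ∈ Λ,
      HasDerivWithinAt (fun t => f x t) (f x l * g x l) Λ l)
    (hderiv_cont : ContinuousOn (fun p : ℝ × ℝ => f p.1 p.2 * g p.1 p.2) (Icc c d ×ˢ Λ))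
    {a b : ℝ} (hab : uIcc a b ⊆ Icc c d) {l₀ : ℝ} (hl₀ : l₀ ∈ interior Λ) :
    HasDerivAt (fun l => ∫ y in a..b, f y l) (∫ y in a..b, f y l₀ * g y l₀) l₀ := by
  have hIcc : uIoc a b ⊆ Icc c d := fun y hy => hab (uIoc_subset_uIcc hy)
  have hΛl : Λ ∈ nhds l₀ := mem_interior_iff_mem_nhds.1 hl₀
  obtain ⟨ε, hε, hball⟩ : ∃ ε, 0 < ε ∧ closedBall l₀ ε ⊆ Λ :=
    (Metric.nhds_basis_closedBall.mem_iff).1 hΛl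
  obtain ⟨M, hM⟩ := (isCompact_Icc.prod (isCompact_closedBall l₀ ε)).exists_bound_of_continuousOn
    (hderiv_cont.mono (Set.prod_mono_right hball))
  have hl₀Λ : l₀ ∈ Λ := interior_subset hl₀
  have hFy : ∀ t ∈ Λ, ContinuousOn (fun y => f y t) (Icc c d) := fun t ht =>
    hf_cont.comp ((continuous_id.prodMk continuous_const).continuousOn) (fun y hy => ⟨hy, ht⟩)
  have hF'y : ContinuousOn (fun y => f y l₀ * g y l₀) (Icc c d) :=
    hderiv_cont.comp ((continuous_id.prodMk continuous_const).continuousOn)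
      (fun y hy => ⟨hy, hl₀Λ⟩)
  refine (intervalIntegral.hasDerivAt_integral_of_dominated_loc_of_deriv_le
      (F := fun l y => f y l) (F' := fun l y => f y l * g y l) (bound := fun _ => M)
      (ball_mem_nhds l₀ hε) ?_ ?_ ?_ ?_ ?_ ?_).2
  · filter_upwards [hΛl] with t ht using
      ((hFy t ht).mono hIcc).aestronglyMeasurable measurableSet_uIoc
  · exact ((hFy l₀ hl₀Λ).mono hab).intervalIntegrable
  · exact (hF'y.mono hIcc).aestronglyMeasurable measurableSet_uIoc
  · exact ae_of_all _ fun y hy x hx => hM (y, x) ⟨hIcc hy, ball_subset_closedBall hx⟩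
  · exact intervalIntegrable_const
  · exact ae_of_all _ fun y hy x hx =>
      (hf_deriv y (hIcc hy) x (hball (ball_subset_closedBall hx))).hasDerivAt
        (mem_nhds_iff.2 ⟨ball l₀ ε, ball_subset_closedBall.trans hball, isOpen_ball, hx⟩)

theorem monotone_ratio_increasing (c d : ℝ) (hcd : c < d)
    (Λ : Set ℝ) (hΛ : Λ.OrdConnected)
    (f g : ℝ → ℝ → ℝ)
    (hf_cont : ContinuousOn (fun p : ℝ × ℝ => f p.1 p.2) (Icc c d ×ˢ Λ))
    (hf_pos : ∀ x ∈ Icc c d, ∀ l ∈ Λ, 0 < f x l)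
    (hf_deriv : ∀ x ∈ Icc c d, ∀ l ∈ Λ,
      HasDerivWithinAt (fun t => f x t) (f x l * g x l) Λ l)
    (hderiv_cont : ContinuousOn (fun p : ℝ × ℝ => f p.1 p.2 * g p.1 p.2) (Icc c d ×ˢ Λ))
    (hg_mono : ∀ l ∈ Λ, StrictMonoOn (fun x => g x l) (Icc c d)) :
    ∀ x ∈ Ioo c d,
      StrictMonoOn (fun l => (∫ y in x..d, f y l) / (∫ y in c..x, f y l)) Λ := by
  intro x hx
  have hxmem : x ∈ Icc c d := ⟨hx.1.le, hx.2.le⟩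
  have hsub1 : uIcc c x ⊆ Icc c d := by
    rw [uIcc_of_le hx.1.le]; exact Icc_subset_Icc le_rfl hx.2.le
  have hsub2 : uIcc x d ⊆ Icc c d := by
    rw [uIcc_of_le hx.2.le]; exact Icc_subset_Icc hx.1.le le_rfl
  have hFy : ∀ t ∈ Λ, ContinuousOn (fun y => f y t) (Icc c d) := fun t ht =>
    hf_cont.comp ((continuous_id.prodMk continuous_const).continuousOn) (fun y hy => ⟨hy, ht⟩)
  have hFGy : ∀ t ∈ Λ, ContinuousOn (fun y => f y t * g y t) (Icc c d) := fun t ht =>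
    hderiv_cont.comp ((continuous_id.prodMk continuous_const).continuousOn)
      (fun y hy => ⟨hy, ht⟩)
  have hApos : ∀ l ∈ Λ, 0 < ∫ y in c..x, f y l := fun l hl =>
    intervalIntegral_pos_of_pos_on ((( hFy l hl).mono hsub1).intervalIntegrable)
      (fun y hy => hf_pos y ⟨hy.1.le, hy.2.le.trans hx.2.le⟩ l hl) hx.1
  have hBpos : ∀ l ∈ Λ, 0 < ∫ y in x..d, f y l := fun l hl =>
    intervalIntegral_pos_of_pos_on ((( hFy l hl).mono hsub2).intervalIntegrable)
      (fun y hy => hf_pos y ⟨hx.1.le.trans hy.1.le, hy.2.le⟩ l hl) hx.2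
  apply strictMonoOn_of_deriv_pos (hΛ.convex)
  · exact ContinuousOn.div (aux_contOn_param hΛ hf_cont hsub2)
      (aux_contOn_param hΛ hf_cont hsub1) (fun l hl => (hApos l hl).ne')
  · intro l hl
    have hlΛ : l ∈ Λ := interior_subset hl
    have hdB := aux_hasDerivAt_param hf_cont hf_deriv hderiv_cont hsub2 hl
    have hdA := aux_hasDerivAt_param hf_cont hf_deriv hderiv_cont hsub1 hl
    have hd : HasDerivAt (fun l => (∫ y in x..d, f y l) / (∫ y in c..x, f y l)) _ l :=
      hdB.div hdA (hApos l hlΛ).ne'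
    rw [hd.deriv]
    have hintB : IntervalIntegrable (fun y => f y l * g y l) MeasureTheory.volume x d :=
      ((hFGy l hlΛ).mono hsub2).intervalIntegrable
    have hintB' : IntervalIntegrable (fun y => g x l * f y l) MeasureTheory.volume x d :=
      (((hFy l hlΛ).mono hsub2).intervalIntegrable).const_mul _
    have hintA : IntervalIntegrable (fun y => f y l * g y l) MeasureTheory.volume c x :=
      ((hFGy l hlΛ).mono hsub1).intervalIntegrable
    have hintA' : IntervalIntegrable (fun y => g x l * f y l) MeasureTheory.volume c x :=
      (((hFy l hlΛ).mono hsub1).intervalIntegrable).const_mul _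
    have key1 : g x l * ∫ y in x..d, f y l < ∫ y in x..d, f y l * g y l := by
      have h1 : 0 < ∫ y in x..d, (f y l * g y l - g x l * f y l) := by
        refine intervalIntegral_pos_of_pos_on (hintB.sub hintB') (fun y hy => ?_) hx.2
        have hymem : y ∈ Icc c d := ⟨hx.1.le.trans hy.1.le, hy.2.le⟩
        have hgy : g x l < g y l := hg_mono l hlΛ hxmem hymem hy.1
        have hfy : 0 < f y l := hf_pos y hymem l hlΛ
        nlinarith
      rw [intervalIntegral.integral_sub hintB hintB',
        intervalIntegral.integral_const_mul, sub_pos] at h1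
      exact h1
    have key2 : (∫ y in c..x, f y l * g y l) < g x l * ∫ y in c..x, f y l := by
      have h2 : 0 < ∫ y in c..x, (g x l * f y l - f y l * g y l) := by
        refine intervalIntegral_pos_of_pos_on (hintA'.sub hintA) (fun y hy => ?_) hx.1
        have hymem : y ∈ Icc c d := ⟨hy.1.le, hy.2.le.trans hx.2.le⟩
        have hgy : g y l < g x l := hg_mono l hlΛ hymem hxmem hy.2
        have hfy : 0 < f y l := hf_pos y hymem l hlΛ
        nlinarith
      rw [intervalIntegral.integral_sub hintA' hintA,
        intervalIntegral.integral_const_mul, sub_pos] at h2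
      exact h2
    apply div_pos
    · have hA := hApos l hlΛ
      have hB := hBpos l hlΛ
      nlinarith
    · exact pow_pos (hApos l hlΛ) 2
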